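/- Fix N ∈ ℕ, points x₁,…,x_N ∈ [0,∞), and a bounded Lipschitz kernel L : [0,∞)² → [0,∞) with ‖L‖_∞ ≤ K, and weights w_i ≥ 0. Consider the ODE system m_i'(t) = (w_i − m_i(t))·∑_{j=1}^N L(x_i, x_j) m_j(t) for i = 1,…,N with initial data 0 ≤ m_i(0) ≤ w_i. Then the solution exists for all t ≥ 0 and satisfies 0 ≤ m_i(t) ≤ w_i for all t ≥ 0 and all i. -/

import Mathlib

open Set

/-- If `f' = d` everywhere, `f 0 ≤ w`, and `d u ≤ 0` whenever `f u > w`, then `f t ≤ w`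
for all `t ≥ 0`. -/
lemma stay_below_aux {f d : ℝ → ℝ} {w : ℝ}
    (hf : ∀ t, HasDerivAt f (d t) t) (h0 : f 0 ≤ w)
    (hd : ∀ u, w < f u → d u ≤ 0) : ∀ t, 0 ≤ t → f t ≤ w := by
  intro t ht
  by_contra hcon
  push_neg at hcon
  have hdiff : Differentiable ℝ f := fun u => (hf u).differentiableAt
  have hfc : Continuous f := hdiff.continuous
  set S : Set ℝ := Icc 0 t ∩ f ⁻¹' (Iic w) with hSdef
  have hScl : IsClosed S := isClosed_Icc.inter (isClosed_Iic.preimage hfc)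
  have hSne : S.Nonempty := ⟨0, ⟨le_rfl, ht⟩, h0⟩
  have hSbdd : BddAbove S := ⟨t, fun u hu => hu.1.2⟩
  set s := sSup S with hsdef
  have hsmem : s ∈ S := hScl.csSup_mem hSne hSbdd
  have hst : s < t := by
    rcases hsmem.1.2.lt_or_eq with h | h
    · exact h
    · exfalso
      have := hsmem.2
      rw [h] at this
      exact absurd this (not_le.mpr hcon)
  have hgt : ∀ u ∈ Ioc s t, w < f u := by
    intro u hu
    by_contra hle
    push_neg at hle
    have hmem : u ∈ S := ⟨⟨le_trans hsmem.1.1 hu.1.le, hu.2⟩, hle⟩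
    exact absurd (le_csSup hSbdd hmem) (not_le.mpr hu.1)
  have hanti : AntitoneOn f (Icc s t) := by
    apply antitoneOn_of_deriv_nonpos (convex_Icc s t) hfc.continuousOn
      (fun u _ => (hdiff u).differentiableWithinAt)
    intro u hu
    rw [interior_Icc] at hu
    rw [(hf u).deriv]
    exact hd u (hgt u ⟨hu.1, hu.2.le⟩)
  have hle := hanti ⟨le_rfl, hst.le⟩ ⟨hst.le, le_rfl⟩ hst.le
  exact absurd (hle.trans hsmem.2) (not_le.mpr hcon)

theorem particle_scheme_global_existence_invariance
    (N : ℕ) (x : Fin N → ℝ) (hx : ∀ i, 0 ≤ x i)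
    (L : ℝ → ℝ → ℝ) (K : ℝ) (hLnonneg : ∀ R r, 0 ≤ L R r)
    (hLbound : ∀ R r, L R r ≤ K)
    (hLLip : ∃ C : NNReal, LipschitzWith C (fun p : ℝ × ℝ => L p.1 p.2))
    (w : Fin N → ℝ) (hw : ∀ i, 0 ≤ w i)
    (m₀ : Fin N → ℝ) (hm₀ : ∀ i, 0 ≤ m₀ i ∧ m₀ i ≤ w i) :
    ∃ m : ℝ → Fin N → ℝ,
      (∀ i, m 0 i = m₀ i) ∧
      (∀ t ≥ (0:ℝ), ∀ i, HasDerivAt (fun s => m s i)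
        ((w i - m t i) * ∑ j, L (x i) (x j) * m t j) t) ∧
      (∀ t ≥ (0:ℝ), ∀ i, 0 ≤ m t i ∧ m t i ≤ w i) := by
  clear hLLip hx
  set W := ∑ j, w j with hWdef
  have hW : 0 ≤ W := Finset.sum_nonneg fun j _ => hw j
  have hK : 0 ≤ K := (hLnonneg 0 0).trans (hLbound 0 0)
  have hwW : ∀ i, w i ≤ W := fun i =>
    Finset.single_le_sum (fun j _ => hw j) (Finset.mem_univ i)
  set p : Fin N → ℝ → ℝ := fun i y => max 0 (min y (w i)) with hpdef
  have hp0 : ∀ i y, 0 ≤ p i y := fun i y => le_max_left 0 _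
  have hpw : ∀ i y, p i y ≤ w i := fun i y => max_le (hw i) (min_le_right _ _)
  have hpeq : ∀ i y, 0 ≤ y → y ≤ w i → p i y = y := by
    intro i y h1 h2
    simp only [hpdef, min_eq_left h2, max_eq_right h1]
  have hplip : ∀ i a b, |p i a - p i b| ≤ |a - b| := by
    intro i a b
    simp only [hpdef]
    calc |max 0 (min a (w i)) - max 0 (min b (w i))|
        = |max (min a (w i)) 0 - max (min b (w i)) 0| := by
          rw [max_comm (0:ℝ) (min a (w i)), max_comm (0:ℝ) (min b (w i))]
      _ ≤ |min a (w i) - min b (w i)| := abs_max_sub_max_le_abs _ _ _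
      _ ≤ max |a - b| |w i - w i| := abs_min_sub_min_le_max _ _ _ _
      _ = |a - b| := by simp
  set F : (Fin N → ℝ) → Fin N → ℝ :=
    fun q i => (w i - p i (q i)) * ∑ j, L (x i) (x j) * p j (q j) with hFdef
  have hSnn : ∀ (i : Fin N) (q : Fin N → ℝ), 0 ≤ ∑ j, L (x i) (x j) * p j (q j) :=
    fun i q => Finset.sum_nonneg fun j _ => mul_nonneg (hLnonneg _ _) (hp0 j _)
  have hSle : ∀ (i : Fin N) (q : Fin N → ℝ), ∑ j, L (x i) (x j) * p j (q j) ≤ K * W := by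
    intro i q
    rw [hWdef, Finset.mul_sum]
    exact Finset.sum_le_sum fun j _ =>
      mul_le_mul (hLbound _ _) (hpw j _) (hp0 j _) hK
  have hFb : ∀ (q : Fin N → ℝ) (i : Fin N), |F q i| ≤ W * (K * W) := by
    intro q i
    simp only [hFdef]
    rw [abs_mul]
    apply mul_le_mul
    · rw [abs_of_nonneg (sub_nonneg.mpr (hpw i _))]
      exact (sub_le_self _ (hp0 i _)).trans (hwW i)
    · rw [abs_of_nonneg (hSnn i q)]
      exact hSle i q
    · exact abs_nonneg _
    · exact hW
  set C₁ : ℝ := K * W * N + K * W with hC1def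
  have hC1 : 0 ≤ C₁ := by positivity
  have hFlip : ∀ q q' : Fin N → ℝ, dist (F q) (F q') ≤ C₁ * dist q q' := by
    intro q q'
    rw [dist_pi_le_iff (by positivity)]
    intro i
    rw [Real.dist_eq]
    have hqd : ∀ j, |p j (q j) - p j (q' j)| ≤ dist q q' := fun j =>
      (hplip j _ _).trans (by rw [← Real.dist_eq]; exact dist_le_pi_dist q q' j)
    have hA : |w i - p i (q i)| ≤ W := by
      rw [abs_of_nonneg (sub_nonneg.mpr (hpw i _))]
      exact (sub_le_self _ (hp0 i _)).trans (hwW i)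
    have hAA : |(w i - p i (q i)) - (w i - p i (q' i))| ≤ dist q q' := by
      have : (w i - p i (q i)) - (w i - p i (q' i)) = -(p i (q i) - p i (q' i)) := by ring
      rw [this, abs_neg]
      exact hqd i
    have hS' : |∑ j, L (x i) (x j) * p j (q' j)| ≤ K * W := by
      rw [abs_of_nonneg (hSnn i q')]
      exact hSle i q'
    have hSS : |(∑ j, L (x i) (x j) * p j (q j)) - ∑ j, L (x i) (x j) * p j (q' j)|
        ≤ K * N * dist q q' := by
      rw [← Finset.sum_sub_distrib]
      calc |∑ j, (L (x i) (x j) * p j (q j) - L (x i) (x j) * p j (q' j))|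
          ≤ ∑ j, |L (x i) (x j) * p j (q j) - L (x i) (x j) * p j (q' j)| :=
            Finset.abs_sum_le_sum_abs _ _
        _ ≤ ∑ _j : Fin N, K * dist q q' := by
            apply Finset.sum_le_sum
            intro j _
            rw [← mul_sub, abs_mul, abs_of_nonneg (hLnonneg _ _)]
            exact mul_le_mul (hLbound _ _) (hqd j) (abs_nonneg _) hK
        _ = K * N * dist q q' := by
            rw [Finset.sum_const, Finset.card_univ, Fintype.card_fin]
            push_cast
            ring
    have hFi : F q i - F q' i
        = (w i - p i (q i)) * ((∑ j, L (x i) (x j) * p j (q j))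
            - ∑ j, L (x i) (x j) * p j (q' j))
          + ((w i - p i (q i)) - (w i - p i (q' i)))
            * ∑ j, L (x i) (x j) * p j (q' j) := by
      simp only [hFdef]
      ring
    calc |F q i - F q' i|
        ≤ |w i - p i (q i)| * |(∑ j, L (x i) (x j) * p j (q j))
              - ∑ j, L (x i) (x j) * p j (q' j)|
          + |(w i - p i (q i)) - (w i - p i (q' i))|
            * |∑ j, L (x i) (x j) * p j (q' j)| := by
          rw [hFi]
          exact (abs_add_le _ _).trans (by rw [abs_mul, abs_mul])
      _ ≤ W * (K * N * dist q q') + dist q q' * (K * W) := by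
          apply add_le_add
          · exact mul_le_mul hA hSS (abs_nonneg _) hW
          · exact mul_le_mul hAA hS' (abs_nonneg _) dist_nonneg
      _ = C₁ * dist q q' := by rw [hC1def]; ring
  have hFlipW : LipschitzWith C₁.toNNReal F := by
    apply LipschitzWith.of_dist_le_mul
    intro q q'
    rw [Real.coe_toNNReal C₁ hC1]
    exact hFlip q q'
  -- local solutions on arbitrarily large intervals
  have exist : ∀ n : ℕ, ∃ f : ℝ → Fin N → ℝ, f 0 = m₀ ∧
      ∀ t ∈ Icc (-((n:ℝ)+1)) ((n:ℝ)+1),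
        HasDerivWithinAt f (F (f t)) (Icc (-((n:ℝ)+1)) ((n:ℝ)+1)) t := by
    intro n
    have hn : (0:ℝ) ≤ (n:ℝ) := Nat.cast_nonneg n
    set B : NNReal := ⟨W * (K * W), by positivity⟩ with hBdef
    have hpl : IsPicardLindelof (fun _ : ℝ => F) (tmin := -((n:ℝ)+1)) (tmax := (n:ℝ)+1)
        ⟨0, by constructor <;> linarith⟩ m₀ (B * ((n:NNReal)+1)) 0 B C₁.toNNReal := by
      apply IsPicardLindelof.of_time_independent
      · intro q _
        rw [pi_norm_le_iff_of_nonneg (by positivity)]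
        intro i
        rw [Real.norm_eq_abs]
        exact hFb q i
      · exact hFlipW.lipschitzOnWith
      · have hmax : max (((n:ℝ)+1) - 0) (0 - (-((n:ℝ)+1))) = (n:ℝ)+1 := by
          rw [sub_zero, zero_sub, neg_neg, max_self]
        show (B:ℝ) * max (((n:ℝ)+1) - 0) (0 - (-((n:ℝ)+1)))
          ≤ ((B * ((n:NNReal)+1) : NNReal) : ℝ) - ((0:NNReal):ℝ)
        rw [hmax, NNReal.coe_zero, sub_zero]
        push_cast
        exact le_rfl
    exact hpl.exists_eq_forall_mem_Icc_hasDerivWithinAt₀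
  choose f hf0 hfd using exist
  have hIoo : ∀ (n : ℕ) (t : ℝ), t ∈ Ioo (-((n:ℝ)+1)) ((n:ℝ)+1) →
      HasDerivAt (f n) (F (f n t)) t := fun n t ht =>
    (hfd n t (Ioo_subset_Icc_self ht)).hasDerivAt (Icc_mem_nhds ht.1 ht.2)
  have key : ∀ a b : ℕ, a ≤ b → ∀ t ∈ Ioo (-((a:ℝ)+1)) ((a:ℝ)+1), f a t = f b t := by
    intro a b hab
    have hcast : (a:ℝ) ≤ (b:ℝ) := Nat.cast_le.mpr hab
    have hsub : Ioo (-((a:ℝ)+1)) ((a:ℝ)+1) ⊆ Ioo (-((b:ℝ)+1)) ((b:ℝ)+1) :=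
      Ioo_subset_Ioo (by linarith) (by linarith)
    have h0mem : (0:ℝ) ∈ Ioo (-((a:ℝ)+1)) ((a:ℝ)+1) := by
      have hca : (0:ℝ) ≤ (a:ℝ) := Nat.cast_nonneg a
      exact ⟨by linarith, by linarith⟩
    exact ODE_solution_unique_of_mem_Ioo
      (v := fun _ : ℝ => F) (s := fun _ => (univ : Set (Fin N → ℝ)))
      (fun _ _ => hFlipW.lipschitzOnWith)
      h0mem
      (fun u hu => ⟨hIoo a u hu, trivial⟩)
      (fun u hu => ⟨hIoo b u (hsub hu), trivial⟩)
      (by rw [hf0 a, hf0 b])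
  set m : ℝ → Fin N → ℝ := fun t => f ⌈|t|⌉₊ t with hmdef
  have hmem : ∀ t : ℝ, t ∈ Ioo (-((⌈|t|⌉₊:ℝ)+1)) ((⌈|t|⌉₊:ℝ)+1) := by
    intro t
    have h1 : |t| < (⌈|t|⌉₊:ℝ) + 1 := lt_of_le_of_lt (Nat.le_ceil _) (by linarith)
    exact abs_lt.mp h1
  have hagree : ∀ (n : ℕ) (t : ℝ), t ∈ Ioo (-((n:ℝ)+1)) ((n:ℝ)+1) → m t = f n t := by
    intro n t ht
    simp only [hmdef]
    rw [key ⌈|t|⌉₊ (max ⌈|t|⌉₊ n) (le_max_left _ _) t (hmem t),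
      ← key n (max ⌈|t|⌉₊ n) (le_max_right _ _) t ht]
  have hm0 : m 0 = m₀ := by
    rw [hagree 0 0 (by norm_num), hf0 0]
  have hmd : ∀ t : ℝ, HasDerivAt m (F (m t)) t := by
    intro t
    have h1 : HasDerivAt (f ⌈|t|⌉₊) (F (f ⌈|t|⌉₊ t)) t := hIoo _ t (hmem t)
    have h2 : m =ᶠ[nhds t] f ⌈|t|⌉₊ :=
      Filter.eventuallyEq_of_mem (isOpen_Ioo.mem_nhds (hmem t))
        (fun u hu => hagree _ u hu)
    have h3 := h1.congr_of_eventuallyEq h2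
    rwa [← hagree _ t (hmem t)] at h3
  have hcoord : ∀ (t : ℝ) (i : Fin N), HasDerivAt (fun s => m s i) (F (m t) i) t := by
    intro t i
    exact (ContinuousLinearMap.proj (R := ℝ) (φ := fun _ : Fin N => ℝ)
      i).hasFDerivAt.comp_hasDerivAt t (hmd t)
  have hbox : ∀ t : ℝ, 0 ≤ t → ∀ i, 0 ≤ m t i ∧ m t i ≤ w i := by
    intro t ht i
    constructor
    · have hlow := stay_below_aux (f := fun s => -(m s i)) (d := fun s => -(F (m s) i))
        (w := 0) (fun u => (hcoord u i).neg)
        (by simp only [hm0]; simpa using (hm₀ i).1) ?_ t ht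
      · have hlow' : -(m t i) ≤ 0 := hlow
        linarith
      · intro u hu
        have hneg : m u i < 0 := by
          have hu' : (0:ℝ) < -(m u i) := hu
          linarith
        have hp : p i (m u i) = 0 := by
          simp only [hpdef]
          rw [min_eq_left (hneg.le.trans (hw i)), max_eq_left hneg.le]
        have hFu : F (m u) i = (w i - p i (m u i)) * ∑ j, L (x i) (x j) * p j (m u j) := by
          simp only [hFdef]
        show -(F (m u) i) ≤ 0
        rw [neg_nonpos, hFu, hp, sub_zero]
        exact mul_nonneg (hw i) (hSnn i (m u))
    · apply stay_below_aux (f := fun s => m s i) (d := fun s => F (m s) i)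
        (fun u => hcoord u i) (by simp only [hm0]; exact (hm₀ i).2) ?_ t ht
      intro u hu
      have hu' : w i < m u i := hu
      have hp : p i (m u i) = w i := by
        simp only [hpdef]
        rw [min_eq_right hu'.le, max_eq_right (hw i)]
      have hFu : F (m u) i = (w i - p i (m u i)) * ∑ j, L (x i) (x j) * p j (m u j) := by
        simp only [hFdef]
      show F (m u) i ≤ 0
      rw [hFu, hp, sub_self, zero_mul]
  refine ⟨m, fun i => by rw [hm0], ?_, fun t ht => hbox t ht⟩
  intro t ht i
  have h := hcoord t i
  have heq : F (m t) i = (w i - m t i) * ∑ j, L (x i) (x j) * m t j := by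
    have h1 : ∀ j, p j (m t j) = m t j := fun j =>
      hpeq j _ (hbox t ht j).1 (hbox t ht j).2
    have hFu : F (m t) i = (w i - p i (m t i)) * ∑ j, L (x i) (x j) * p j (m t j) := by
      simp only [hFdef]
    rw [hFu, h1 i]
    congr 1
    exact Finset.sum_congr rfl fun j _ => by rw [h1 j]
  rwa [heq] at h
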